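/- Let d ≥ 1, λ > 0, and n ≥ 1. If P is a polynomial in d variables that is homogeneous of degree n and harmonic (ΔP = 0), then ⟨P, g⟩_{−2} = 0 for every polynomial g of degree at most n−1. -/

import Mathlib

open MvPolynomial MeasureTheory

/-- The Laplacian `Δ = ∑ ∂²/∂xᵢ²` acting on polynomials in `d` variables. -/
noncomputable def lap {d : ℕ} (P : MvPolynomial (Fin d) ℝ) : MvPolynomial (Fin d) ℝ :=
  ∑ i, pderiv i (pderiv i P)

/-- The polynomial `‖x‖² = x₁² + ⋯ + x_d²`. -/
noncomputable def normSq (d : ℕ) : MvPolynomial (Fin d) ℝ := ∑ i, X i ^ 2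

/-- Evaluation of a polynomial at a point of Euclidean space. -/
noncomputable def evalP {d : ℕ} (f : MvPolynomial (Fin d) ℝ)
    (x : EuclideanSpace ℝ (Fin d)) : ℝ :=
  MvPolynomial.eval (fun i => x i) f

/-- The closed unit ball `B^d ⊆ ℝ^d`. -/
noncomputable def ballD (d : ℕ) : Set (EuclideanSpace ℝ (Fin d)) :=
  Metric.closedBall 0 1

/-- The surface measure `dω` on the unit sphere `S^{d−1}`. -/
noncomputable def sphereMeas (d : ℕ) :
    Measure (Metric.sphere (0 : EuclideanSpace ℝ (Fin d)) 1) :=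
  (volume : Measure (EuclideanSpace ℝ (Fin d))).toSphere

/-- The total surface area `ω_d = ∫_{S^{d−1}} dω`. -/
noncomputable def omegaD (d : ℕ) : ℝ := (sphereMeas d Set.univ).toReal

/-- The volume of the unit ball `B^d`. -/
noncomputable def volB (d : ℕ) : ℝ := (volume (ballD d)).toReal

/-- The inner product
`⟨f,g⟩_{−2} = (λ/ω_d) ∫_{B^d} Δf Δg dx + (1/ω_d) ∫_{S^{d−1}} f g dω`. -/
noncomputable def innerNeg2 (d : ℕ) (lam : ℝ) (f g : MvPolynomial (Fin d) ℝ) : ℝ :=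
  (lam / omegaD d) * ∫ x in ballD d, evalP (lap f) x * evalP (lap g) x +
    (1 / omegaD d) * ∫ y : Metric.sphere (0 : EuclideanSpace ℝ (Fin d)) 1,
      evalP f y * evalP g y ∂(sphereMeas d)

/-- The inner product
`⟨f,g⟩_Δ = a_d ∫_{B^d} Δ[(1−‖x‖²)f] Δ[(1−‖x‖²)g] dx`, `a_d = 1/(4d² vol(B^d))`. -/
noncomputable def innerDelta (d : ℕ) (f g : MvPolynomial (Fin d) ℝ) : ℝ :=
  (1 / (4 * (d : ℝ) ^ 2 * volB d)) *
    ∫ x in ballD d,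
      evalP (lap ((1 - normSq d) * f)) x * evalP (lap ((1 - normSq d) * g)) x

namespace Aux13

open Real Set


/-- 1-dim Gaussian moment. -/
noncomputable def M (k : ℕ) : ℝ := ∫ x : ℝ, x ^ k * Real.exp (-x ^ 2)

lemma integrable_pow_gauss (k : ℕ) :
    Integrable fun x : ℝ => x ^ k * Real.exp (-x ^ 2) := by
  have h := integrable_rpow_mul_exp_neg_mul_sq (b := 1) one_pos
    (s := (k : ℝ)) (lt_of_lt_of_le neg_one_lt_zero (Nat.cast_nonneg k))
  simpa [Real.rpow_natCast] using h

/-- Gaussian moment over `Ioi 0`. -/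
noncomputable def Ig (k : ℕ) : ℝ := ∫ x in Ioi (0:ℝ), x ^ k * Real.exp (-x ^ 2)

lemma Ig_eq (k : ℕ) : Ig k = (1 / 2) * Real.Gamma ((k + 1) / 2) := by
  have h := integral_rpow_mul_exp_neg_rpow (p := 2) (q := (k : ℝ)) two_pos
    (lt_of_lt_of_le neg_one_lt_zero (Nat.cast_nonneg k))
  rw [Ig, ← h]
  refine setIntegral_congr_fun measurableSet_Ioi (fun x hx => ?_)
  rw [Real.rpow_natCast, show (2:ℝ) = ((2:ℕ):ℝ) by norm_num, Real.rpow_natCast]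

lemma Ig_pos (k : ℕ) : 0 < Ig k := by
  rw [Ig_eq]
  have : 0 < Real.Gamma ((k + 1) / 2) := Real.Gamma_pos_of_pos (by positivity)
  linarith

lemma M_even {k : ℕ} (hk : Even k) : M k = Real.Gamma ((k + 1) / 2) := by
  have h : ∀ x : ℝ, x ^ k * Real.exp (-x ^ 2)
      = (fun t : ℝ => t ^ k * Real.exp (-t ^ 2)) |x| := by
    intro x
    simp only [hk.pow_abs, sq_abs]
  calc M k = ∫ x : ℝ, (fun t : ℝ => t ^ k * Real.exp (-t ^ 2)) |x| := by
        rw [M]; exact integral_congr_ae (Filter.Eventually.of_forall h)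
    _ = 2 * Ig k := by rw [Ig]; exact integral_comp_abs (f := fun t : ℝ => t ^ k * Real.exp (-t ^ 2))
    _ = Real.Gamma ((k + 1) / 2) := by rw [Ig_eq]; ring

lemma M_odd {k : ℕ} (hk : Odd k) : M k = 0 := by
  have hi := integrable_pow_gauss k
  have hneg : ∫ x in Iic (0:ℝ), x ^ k * Real.exp (-x ^ 2) = - Ig k := by
    have h := integral_comp_neg_Iic (0:ℝ) (fun x => x ^ k * Real.exp (-x ^ 2))
    rw [neg_zero] at h
    have h2 : ∀ x : ℝ, (-x) ^ k * Real.exp (-(-x) ^ 2)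
        = -(x ^ k * Real.exp (-x ^ 2)) := by
      intro x; rw [hk.neg_pow, neg_sq]; ring
    simp only [h2, integral_neg] at h
    rw [Ig, ← h, neg_neg]
  have hsplit : M k = (∫ x in Iic (0:ℝ), x ^ k * Real.exp (-x ^ 2)) + Ig k := by
    rw [M, Ig, ← setIntegral_union (Iic_disjoint_Ioi le_rfl) measurableSet_Ioi
      hi.integrableOn hi.integrableOn, Iic_union_Ioi, Measure.restrict_univ]
  rw [hsplit, hneg]; ring

lemma M_one : M 1 = 0 := M_odd odd_one

lemma M_rec (k : ℕ) : M (k + 2) = ((k : ℝ) + 1) / 2 * M k := by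
  rcases Nat.even_or_odd k with he | ho
  · rw [M_even he, M_even (by rcases he with ⟨m, hm⟩; exact ⟨m+1, by omega⟩ : Even (k+2))]
    have h1 : ((k:ℝ) + 2 + 1) / 2 = ((k:ℝ) + 1) / 2 + 1 := by ring
    push_cast
    rw [h1, Real.Gamma_add_one (by positivity)]
  · rw [M_odd ho, M_odd (by rcases ho with ⟨m, hm⟩; exact ⟨m+1, by omega⟩ : Odd (k + 2))]; ring


lemma M_succ (a : ℕ) : M (a + 1) = (a : ℝ) / 2 * M (a - 1) := by
  cases a with
  | zero => simp [M_one]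
  | succ b =>
    have h := M_rec b
    push_cast
    push_cast at h
    convert h using 2


variable {d : ℕ}

lemma fin_sum_eq_degree (α : Fin d →₀ ℕ) : ∑ i, α i = Finsupp.degree α :=
  (Finset.sum_subset (Finset.subset_univ _)
    (fun _ _ h => Finsupp.notMem_support_iff.mp h)).symm

lemma homog_support_sum {f : MvPolynomial (Fin d) ℝ} {n : ℕ} (hf : f.IsHomogeneous n)
    {α : Fin d →₀ ℕ} (hα : α ∈ f.support) : ∑ i, α i = n := by
  rw [fin_sum_eq_degree, Finsupp.degree_eq_weight_one]
  exact hf (mem_support_iff.mp hα)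

lemma gauss_prod (c : ℝ) (a : Fin d → ℕ) (x : Fin d → ℝ) :
    (c * ∏ i, x i ^ a i) * Real.exp (-∑ i, x i ^ 2)
      = c * ∏ i, (x i ^ a i * Real.exp (-x i ^ 2)) := by
  have h : Real.exp (-∑ i, x i ^ 2) = ∏ i, Real.exp (-x i ^ 2) := by
    rw [← Real.exp_sum]
    congr 1
    rw [Finset.sum_neg_distrib]
  rw [h, Finset.prod_mul_distrib]
  ring

lemma integrable_term (c : ℝ) (a : Fin d → ℕ) :
    Integrable (fun x : Fin d → ℝ =>
      (c * ∏ i, x i ^ a i) * Real.exp (-∑ i, x i ^ 2)) := by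
  simp only [gauss_prod]
  exact (Integrable.fintype_prod (f := fun i (t : ℝ) => t ^ a i * Real.exp (-t ^ 2))
    (fun i => integrable_pow_gauss (a i))).const_mul c

lemma integrable_evalG (f : MvPolynomial (Fin d) ℝ) :
    Integrable (fun x : Fin d → ℝ => eval x f * Real.exp (-∑ i, x i ^ 2)) := by
  have h : (fun x : Fin d → ℝ => eval x f * Real.exp (-∑ i, x i ^ 2))
      = fun x => ∑ α ∈ f.support, (coeff α f * ∏ i, x i ^ α i) * Real.exp (-∑ i, x i ^ 2) := by
    funext x; rw [eval_eq', Finset.sum_mul]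
  rw [h]
  exact integrable_finset_sum _ (fun α _ => integrable_term _ _)

noncomputable def G (f : MvPolynomial (Fin d) ℝ) : ℝ :=
  ∫ x : Fin d → ℝ, eval x f * Real.exp (-∑ i, x i ^ 2)

lemma G_sum {ι : Type*} (s : Finset ι) (h : ι → MvPolynomial (Fin d) ℝ) :
    G (∑ j ∈ s, h j) = ∑ j ∈ s, G (h j) := by
  simp only [G, map_sum, Finset.sum_mul]
  exact integral_finset_sum s (fun j _ => integrable_evalG (h j))

lemma G_add (f g : MvPolynomial (Fin d) ℝ) : G (f + g) = G f + G g := by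
  simp only [G, map_add, add_mul]
  exact integral_add (integrable_evalG f) (integrable_evalG g)

lemma G_C_mul (c : ℝ) (f : MvPolynomial (Fin d) ℝ) : G (C c * f) = c * G f := by
  rw [G, G, ← integral_const_mul]
  congr 1; funext x
  simp [mul_assoc]

lemma G_zero : G (0 : MvPolynomial (Fin d) ℝ) = 0 := by simp [G]

lemma G_monomial (α : Fin d →₀ ℕ) (c : ℝ) : G (monomial α c) = c * ∏ i, M (α i) := by
  rw [G]
  have h : ∀ x : Fin d → ℝ, eval x (monomial α c) * Real.exp (-∑ i, x i ^ 2)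
      = c * ∏ i, (x i ^ α i * Real.exp (-x i ^ 2)) := by
    intro x
    rw [eval_monomial, Finsupp.prod_pow, gauss_prod]
  simp only [h]
  rw [integral_const_mul,
    integral_fintype_prod_volume_eq_prod (ι := Fin d) (fun i (t : ℝ) => t ^ α i * Real.exp (-t ^ 2))]
  rfl

lemma X_mul_monomial' (i : Fin d) (α : Fin d →₀ ℕ) (c : ℝ) :
    (X i : MvPolynomial (Fin d) ℝ) * monomial α c = monomial (Finsupp.single i 1 + α) c := by
  rw [show (X i : MvPolynomial (Fin d) ℝ) = monomial (Finsupp.single i 1) 1 from rfl,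
    monomial_mul, one_mul]

lemma G_X_mul_monomial (i : Fin d) (α : Fin d →₀ ℕ) (c : ℝ) :
    G (X i * monomial α c) = 1 / 2 * G (pderiv i (monomial α c)) := by
  rw [X_mul_monomial', pderiv_monomial, G_monomial, G_monomial,
    Finset.prod_eq_mul_prod_sdiff_singleton_of_mem (Finset.mem_univ i),
    Finset.prod_eq_mul_prod_sdiff_singleton_of_mem (Finset.mem_univ i)]
  have h1 : ((Finsupp.single i 1 + α : Fin d →₀ ℕ)) i = α i + 1 := by
    rw [Finsupp.add_apply, Finsupp.single_eq_same, add_comm]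
  have h2 : ((α - Finsupp.single i 1 : Fin d →₀ ℕ)) i = α i - 1 := by
    rw [Finsupp.tsub_apply, Finsupp.single_eq_same]
  have h3 : ∀ j ∈ Finset.univ \ {i}, M (((Finsupp.single i 1 + α : Fin d →₀ ℕ)) j) = M (α j) := by
    intro j hj
    have hne : j ≠ i := by simpa using (Finset.mem_sdiff.mp hj).2
    rw [Finsupp.add_apply, Finsupp.single_apply, if_neg (fun hh => hne hh.symm), zero_add]
  have h4 : ∀ j ∈ Finset.univ \ {i}, M (((α - Finsupp.single i 1 : Fin d →₀ ℕ)) j) = M (α j) := by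
    intro j hj
    have hne : j ≠ i := by simpa using (Finset.mem_sdiff.mp hj).2
    rw [Finsupp.tsub_apply, Finsupp.single_apply, if_neg (fun hh => hne hh.symm), Nat.sub_zero]
  rw [Finset.prod_congr rfl h3, Finset.prod_congr rfl h4, h1, h2, M_succ (α i)]
  ring

lemma G_X_mul (i : Fin d) (f : MvPolynomial (Fin d) ℝ) :
    G (X i * f) = 1 / 2 * G (pderiv i f) := by
  conv_lhs => rw [f.as_sum]
  conv_rhs => rw [f.as_sum]
  rw [Finset.mul_sum, G_sum, map_sum, G_sum, Finset.mul_sum]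
  exact Finset.sum_congr rfl (fun α _ => G_X_mul_monomial i α (coeff α f))

lemma sum_X_mul_pderiv_monomial (α : Fin d →₀ ℕ) (c : ℝ) :
    ∑ i, (X i : MvPolynomial (Fin d) ℝ) * pderiv i (monomial α c)
      = (∑ i, α i) • monomial α c := by
  rw [Finset.sum_smul]
  refine Finset.sum_congr rfl (fun i _ => ?_)
  rw [pderiv_monomial, X_mul_monomial']
  rcases Nat.eq_zero_or_pos (α i) with h | h
  · simp [h]
  · have hexp : Finsupp.single i 1 + (α - Finsupp.single i 1) = α := by
      ext j
      rcases eq_or_ne j i with rfl | hne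
      · rw [Finsupp.add_apply, Finsupp.tsub_apply, Finsupp.single_eq_same]
        omega
      · rw [Finsupp.add_apply, Finsupp.tsub_apply, Finsupp.single_apply,
          if_neg (fun hh => hne hh.symm), Nat.sub_zero, zero_add]
    rw [hexp, nsmul_eq_mul, show ((α i : ℕ) : MvPolynomial (Fin d) ℝ) = C ((α i : ℕ) : ℝ) by
      simp [map_natCast], C_mul_monomial, mul_comm]

lemma euler {f : MvPolynomial (Fin d) ℝ} {n : ℕ} (hf : f.IsHomogeneous n) :
    ∑ i, (X i : MvPolynomial (Fin d) ℝ) * pderiv i f = n • f := by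
  conv_lhs => rw [f.as_sum]
  conv_rhs => rw [f.as_sum]
  rw [Finset.smul_sum]
  simp only [map_sum, Finset.mul_sum]
  rw [Finset.sum_comm]
  refine Finset.sum_congr rfl (fun α hα => ?_)
  rw [sum_X_mul_pderiv_monomial, homog_support_sum hf hα]



variable {d : ℕ}

lemma pderiv_comm_monomial (i k : Fin d) (α : Fin d →₀ ℕ) (c : ℝ) :
    pderiv i (pderiv k (monomial α c : MvPolynomial (Fin d) ℝ))
      = pderiv k (pderiv i (monomial α c)) := by
  rcases eq_or_ne i k with rfl | hne
  · rfl
  · rw [pderiv_monomial, pderiv_monomial, pderiv_monomial, pderiv_monomial]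
    have e1 : ((α - Finsupp.single k 1 : Fin d →₀ ℕ)) i = α i := by
      rw [Finsupp.tsub_apply, Finsupp.single_apply, if_neg (fun hh => hne hh.symm), Nat.sub_zero]
    have e2 : ((α - Finsupp.single i 1 : Fin d →₀ ℕ)) k = α k := by
      rw [Finsupp.tsub_apply, Finsupp.single_apply, if_neg (fun hh => hne hh), Nat.sub_zero]
    have e3 : α - Finsupp.single k 1 - Finsupp.single i 1
        = α - Finsupp.single i 1 - Finsupp.single k 1 := by
      ext j
      simp only [Finsupp.tsub_apply]
      omega
    rw [e1, e2, e3]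
    ring_nf

lemma pderiv_comm' (i k : Fin d) (f : MvPolynomial (Fin d) ℝ) :
    pderiv i (pderiv k f) = pderiv k (pderiv i f) := by
  conv_lhs => rw [f.as_sum]
  conv_rhs => rw [f.as_sum]
  rw [map_sum, map_sum, map_sum, map_sum]
  exact Finset.sum_congr rfl fun α _ => pderiv_comm_monomial i k α (coeff α f)

lemma lap_pderiv (i : Fin d) (f : MvPolynomial (Fin d) ℝ) :
    lap (pderiv i f) = pderiv i (lap f) := by
  unfold lap
  rw [map_sum]
  refine Finset.sum_congr rfl fun k _ => ?_
  rw [pderiv_comm' k i f, pderiv_comm' k i (pderiv k f)]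

lemma sum_single_one (i : Fin d) : ∑ j, (Finsupp.single i 1 : Fin d →₀ ℕ) j = 1 := by
  rw [Finset.sum_eq_single i
    (fun b _ hb => by rw [Finsupp.single_apply, if_neg (fun hh => hb hh.symm)])
    (fun h => absurd (Finset.mem_univ i) h), Finsupp.single_eq_same]

lemma sum_tsub_single (α : Fin d →₀ ℕ) (i : Fin d) (h : 0 < α i) :
    ∑ j, ((α - Finsupp.single i 1 : Fin d →₀ ℕ)) j = (∑ j, α j) - 1 := by
  have h1 : ∀ j : Fin d, ((α - Finsupp.single i 1 : Fin d →₀ ℕ)) j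
      + (Finsupp.single i 1 : Fin d →₀ ℕ) j = α j := by
    intro j
    rcases eq_or_ne j i with rfl | hne
    · rw [Finsupp.tsub_apply, Finsupp.single_eq_same]
      omega
    · rw [Finsupp.tsub_apply, Finsupp.single_apply, if_neg (fun hh => hne hh.symm)]
      omega
  have h2 : (∑ j, ((α - Finsupp.single i 1 : Fin d →₀ ℕ)) j)
      + ∑ j, (Finsupp.single i 1 : Fin d →₀ ℕ) j = ∑ j, α j := by
    rw [← Finset.sum_add_distrib]
    exact Finset.sum_congr rfl fun j _ => h1 j
  rw [sum_single_one] at h2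
  omega

lemma sum_tsub_single_le (α : Fin d →₀ ℕ) (i : Fin d) :
    ∑ j, ((α - Finsupp.single i 1 : Fin d →₀ ℕ)) j ≤ ∑ j, α j := by
  refine Finset.sum_le_sum fun j _ => ?_
  rw [Finsupp.tsub_apply]
  exact Nat.sub_le _ _

lemma homog_pderiv {f : MvPolynomial (Fin d) ℝ} {n : ℕ} (hf : f.IsHomogeneous n) (i : Fin d) :
    (pderiv i f).IsHomogeneous (n - 1) := by
  conv_lhs => rw [f.as_sum]
  rw [map_sum]
  refine IsHomogeneous.sum _ _ _ fun α hα => ?_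
  rw [pderiv_monomial]
  rcases Nat.eq_zero_or_pos (α i) with h | h
  · rw [h]
    norm_num
    exact isHomogeneous_zero _ _ _
  · refine isHomogeneous_monomial _ ?_
    rw [← fin_sum_eq_degree, sum_tsub_single α i h, homog_support_sum hf hα]

lemma harmonic_G_zero {n : ℕ} (hn : 1 ≤ n) {P : MvPolynomial (Fin d) ℝ}
    (hP : P.IsHomogeneous n) (hh : lap P = 0) : G P = 0 := by
  have h1 : (n : ℝ) * G P = ∑ i, G (X i * pderiv i P) := by
    rw [← G_sum Finset.univ (fun i => X i * pderiv i P), euler hP, nsmul_eq_mul,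
      ← map_natCast (C : ℝ →+* MvPolynomial (Fin d) ℝ) n, G_C_mul]
  have h2 : ∑ i, G (X i * pderiv i P) = 1 / 2 * G (lap P) := by
    simp only [G_X_mul]
    rw [← Finset.mul_sum, ← G_sum Finset.univ (fun i => pderiv i (pderiv i P))]
    rfl
  rw [h2, hh, G_zero, mul_zero] at h1
  have hn' : (n : ℝ) ≠ 0 := Nat.cast_ne_zero.mpr (by omega)
  exact (mul_eq_zero.mp h1).resolve_left hn'

lemma G_mul_monomial_zero : ∀ j : ℕ, ∀ n : ℕ, j < n → ∀ P : MvPolynomial (Fin d) ℝ,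
    P.IsHomogeneous n → lap P = 0 → ∀ α : Fin d →₀ ℕ, (∑ i, α i) = j → ∀ c : ℝ,
    G (P * monomial α c) = 0 := by
  intro j
  induction j using Nat.strong_induction_on with
  | _ j IH =>
  intro n hjn P hP hh α hα c
  rcases Nat.eq_zero_or_pos j with rfl | hj
  · have hα0 : α = 0 := by
      ext i
      have := (Finset.sum_eq_zero_iff.mp hα) i (Finset.mem_univ i)
      simpa using this
    rw [hα0, monomial_zero', mul_comm, G_C_mul,
      harmonic_G_zero (by omega) hP hh, mul_zero]
  · obtain ⟨i, hi⟩ : ∃ i, 0 < α i := by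
      by_contra hcon
      push_neg at hcon
      have h0 : ∑ i, α i = 0 := Finset.sum_eq_zero fun i _ => Nat.le_zero.mp (hcon i)
      omega
    set β := α - Finsupp.single i 1 with hβ
    have hαβ : α = Finsupp.single i 1 + β := by
      ext j'
      rcases eq_or_ne j' i with rfl | hne
      · rw [Finsupp.add_apply, Finsupp.tsub_apply, Finsupp.single_eq_same]
        omega
      · rw [Finsupp.add_apply, Finsupp.tsub_apply, Finsupp.single_apply,
          if_neg (fun hh => hne hh.symm), Nat.sub_zero, zero_add]
    have hsβ : ∑ k, β k = j - 1 := by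
      rw [hβ, sum_tsub_single α i hi, hα]
    have hstep : P * monomial α c = X i * (P * monomial β c) := by
      conv_lhs => rw [hαβ, ← X_mul_monomial']
      ring
    rw [hstep, G_X_mul, pderiv_mul, G_add]
    have t1 : G (pderiv i P * monomial β c) = 0 := by
      exact IH (j - 1) (by omega) (n - 1) (by omega) _ (homog_pderiv hP i)
        (by rw [lap_pderiv, hh, map_zero]) β hsβ c
    have t2 : G (P * pderiv i (monomial β c)) = 0 := by
      rw [pderiv_monomial]
      refine IH (∑ k, ((β - Finsupp.single i 1 : Fin d →₀ ℕ)) k) ?_ n ?_ P hP hh _ rfl _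
      · have := sum_tsub_single_le β i
        omega
      · have := sum_tsub_single_le β i
        omega
    rw [t1, t2]
    ring

lemma G_mul_homog_zero {n j : ℕ} (hjn : j < n) {P q : MvPolynomial (Fin d) ℝ}
    (hP : P.IsHomogeneous n) (hh : lap P = 0) (hq : q.IsHomogeneous j) :
    G (P * q) = 0 := by
  conv_lhs => rw [q.as_sum]
  rw [Finset.mul_sum, G_sum]
  refine Finset.sum_eq_zero fun α hα => ?_
  exact G_mul_monomial_zero j n hjn P hP hh α (homog_support_sum hq hα) _



lemma evalP_smul {f : MvPolynomial (Fin d) ℝ} {m : ℕ} (hf : f.IsHomogeneous m)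
    (r : ℝ) (x : EuclideanSpace ℝ (Fin d)) : evalP f (r • x) = r ^ m * evalP f x := by
  unfold evalP
  have hx : (fun i => (r • x) i) = fun i => r * x i := rfl
  rw [hx, eval_eq', eval_eq', Finset.mul_sum]
  refine Finset.sum_congr rfl fun α hα => ?_
  have h : ∏ i, (r * x i) ^ α i = r ^ m * ∏ i, x i ^ α i := by
    simp only [mul_pow]
    rw [Finset.prod_mul_distrib, Finset.prod_pow_eq_pow_sum, homog_support_sum hf hα]
  rw [h]
  ring

lemma Gint_eq_G (f : MvPolynomial (Fin d) ℝ) :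
    ∫ x : EuclideanSpace ℝ (Fin d), evalP f x * Real.exp (-‖x‖ ^ 2) = G f := by
  have h := ((EuclideanSpace.volume_preserving_symm_measurableEquiv_toLp (Fin d)).symm).integral_comp'
    (fun y : EuclideanSpace ℝ (Fin d) => evalP f y * Real.exp (-‖y‖ ^ 2))
  rw [← h, G]
  congr 1
  funext x
  congr 2
  rw [EuclideanSpace.norm_eq, Real.sq_sqrt (by positivity)]
  simp only [Real.norm_eq_abs, sq_abs]
  rfl

lemma sphere_int (hd : 1 ≤ d) {f : MvPolynomial (Fin d) ℝ} {m : ℕ} (hf : f.IsHomogeneous m) :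
    G f = (∫ y : Metric.sphere (0 : EuclideanSpace ℝ (Fin d)) 1, evalP f y ∂(sphereMeas d))
      * Ig (d - 1 + m) := by
  set E := EuclideanSpace ℝ (Fin d)
  haveI : Nontrivial E :=
    ⟨⟨EuclideanSpace.single ⟨0, hd⟩ 1, 0,
      fun h => one_ne_zero (α := ℝ) (by simpa using congrArg (fun v : E => v ⟨0, hd⟩) h)⟩⟩
  have hdim : Module.finrank ℝ E = d := finrank_euclideanSpace_fin
  have step1 : G f = ∫ x : ({0}ᶜ : Set E),
      evalP f x.1 * Real.exp (-‖x.1‖ ^ 2) ∂((volume : Measure E).comap Subtype.val) := by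
    rw [← Gint_eq_G f,
      integral_subtype_comap (measurableSet_singleton (0:E)).compl
        (fun x => evalP f x * Real.exp (-‖x‖ ^ 2)),
      MeasureTheory.restrict_compl_singleton]
  have step2 := ((volume : Measure E).measurePreserving_homeomorphUnitSphereProd).integral_comp
    (Homeomorph.measurableEmbedding _)
    (fun p : Metric.sphere (0:E) 1 × Ioi (0:ℝ) =>
      evalP f ((homeomorphUnitSphereProd E).symm p : E)
        * Real.exp (-‖((homeomorphUnitSphereProd E).symm p : E)‖ ^ 2))
  simp only [Homeomorph.symm_apply_apply] at step2
  have step3 : ∀ p : Metric.sphere (0:E) 1 × Ioi (0:ℝ),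
      evalP f ((homeomorphUnitSphereProd E).symm p : E)
        * Real.exp (-‖((homeomorphUnitSphereProd E).symm p : E)‖ ^ 2)
      = evalP f p.1 * ((p.2 : ℝ) ^ m * Real.exp (-(p.2 : ℝ) ^ 2)) := by
    intro p
    have hcoe : ((homeomorphUnitSphereProd E).symm p : E) = (p.2 : ℝ) • (p.1 : E) :=
      homeomorphUnitSphereProd_symm_apply_coe E p
    have hr : (0:ℝ) < (p.2 : ℝ) := p.2.2
    have hnorm : ‖(p.2 : ℝ) • (p.1 : E)‖ = (p.2 : ℝ) := by
      rw [norm_smul, mem_sphere_zero_iff_norm.mp p.1.2, mul_one,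
        Real.norm_eq_abs, abs_of_pos hr]
    rw [hcoe, evalP_smul hf, hnorm]
    ring
  have step4 : ∫ p : Metric.sphere (0:E) 1 × Ioi (0:ℝ),
      (fun θ : Metric.sphere (0:E) 1 => evalP f θ) p.1 *
      (fun r : Ioi (0:ℝ) => (r : ℝ) ^ m * Real.exp (-(r:ℝ) ^ 2)) p.2
      ∂(((volume : Measure E).toSphere).prod (.volumeIoiPow (Module.finrank ℝ E - 1)))
      = (∫ θ : Metric.sphere (0:E) 1, evalP f θ ∂((volume : Measure E).toSphere))
        * ∫ r : Ioi (0:ℝ), (r : ℝ) ^ m * Real.exp (-(r:ℝ) ^ 2)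
            ∂(Measure.volumeIoiPow (Module.finrank ℝ E - 1)) :=
    integral_prod_mul (μ := (volume : Measure E).toSphere)
      (ν := Measure.volumeIoiPow (Module.finrank ℝ E - 1))
      (fun θ : Metric.sphere (0:E) 1 => evalP f θ)
      (fun r : Ioi (0:ℝ) => (r : ℝ) ^ m * Real.exp (-(r:ℝ) ^ 2))
  have step5 : ∫ r : Ioi (0:ℝ), (r : ℝ) ^ m * Real.exp (-(r:ℝ) ^ 2)
      ∂(Measure.volumeIoiPow (Module.finrank ℝ E - 1)) = Ig (d - 1 + m) := by
    rw [hdim]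
    simp only [Measure.volumeIoiPow, ENNReal.ofReal]
    rw [integral_withDensity_eq_integral_smul
      ((measurable_subtype_coe.pow_const _).real_toNNReal),
      integral_subtype_comap measurableSet_Ioi
        (fun a : ℝ => Real.toNNReal (a ^ (d - 1)) • (a ^ m * Real.exp (-a ^ 2)))]
    rw [Ig]
    refine setIntegral_congr_fun measurableSet_Ioi (fun x hx => ?_)
    rw [NNReal.smul_def, Real.coe_toNNReal _ (pow_nonneg (le_of_lt hx) _), smul_eq_mul,
      ← mul_assoc, ← pow_add]
  rw [step1, step2, integral_congr_ae (Filter.Eventually.of_forall step3), step4, step5]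
  rfl



open Real Set

lemma integrable_sphere (h : MvPolynomial (Fin d) ℝ) :
    Integrable (fun y : Metric.sphere (0 : EuclideanSpace ℝ (Fin d)) 1 => evalP h y)
      (sphereMeas d) := by
  haveI : IsFiniteMeasure (sphereMeas d) := by unfold sphereMeas; infer_instance
  have hc : Continuous fun x : EuclideanSpace ℝ (Fin d) => evalP h x :=
    (MvPolynomial.continuous_eval (p := h)).comp
      (EuclideanSpace.equiv (Fin d) ℝ).continuous
  have hcs : Continuous fun y : Metric.sphere (0 : EuclideanSpace ℝ (Fin d)) 1 => evalP h y :=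
    hc.comp continuous_subtype_val
  exact hcs.integrable_of_hasCompactSupport ((isClosed_tsupport _).isCompact)

lemma sphere_comp_zero (hd : 1 ≤ d) {n : ℕ} {P : MvPolynomial (Fin d) ℝ}
    (hP : P.IsHomogeneous n) (hh : lap P = 0) {j : ℕ} (hj : j < n)
    (q : MvPolynomial (Fin d) ℝ) (hq : q.IsHomogeneous j) :
    ∫ y : Metric.sphere (0 : EuclideanSpace ℝ (Fin d)) 1, evalP (P * q) y ∂(sphereMeas d)
      = 0 := by
  have h1 : G (P * q) = 0 := G_mul_homog_zero hj hP hh hq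
  have h2 := sphere_int hd (hP.mul hq)
  rw [h1] at h2
  rcases mul_eq_zero.mp h2.symm with h | h
  · exact h
  · exact absurd h (Ig_pos (d - 1 + (n + j))).ne'


end Aux13

/-- a harmonic polynomial `P`, homogeneous of degree `n ≥ 1`, satisfies
`⟨P, g⟩_{−2} = 0` for every polynomial `g` of degree at most `n−1`. -/
theorem stmt13 (d : ℕ) (hd : 1 ≤ d) (lam : ℝ) (hlam : 0 < lam) (n : ℕ) (hn : 1 ≤ n)
    (P : MvPolynomial (Fin d) ℝ) (hhom : P.IsHomogeneous n) (hharm : lap P = 0)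
    (g : MvPolynomial (Fin d) ℝ) (hg : g.totalDegree < n) :
    innerNeg2 d lam P g = 0 := by
  have hsph : ∫ y : Metric.sphere (0 : EuclideanSpace ℝ (Fin d)) 1,
      evalP P y * evalP g y ∂(sphereMeas d) = 0 := by
    have hdecomp := sum_homogeneousComponent g
    calc ∫ y : Metric.sphere (0 : EuclideanSpace ℝ (Fin d)) 1,
        evalP P y * evalP g y ∂(sphereMeas d)
        = ∫ y : Metric.sphere (0 : EuclideanSpace ℝ (Fin d)) 1,
            ∑ j ∈ Finset.range (g.totalDegree + 1),
              evalP (P * homogeneousComponent j g) y ∂(sphereMeas d) := by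
          congr 1
          funext y
          conv_lhs => rw [← hdecomp]
          simp only [evalP, map_sum, Finset.mul_sum, map_mul]
      _ = ∑ j ∈ Finset.range (g.totalDegree + 1),
            ∫ y : Metric.sphere (0 : EuclideanSpace ℝ (Fin d)) 1,
              evalP (P * homogeneousComponent j g) y ∂(sphereMeas d) :=
          integral_finset_sum _ (fun j _ => Aux13.integrable_sphere _)
      _ = 0 := Finset.sum_eq_zero fun j hj =>
          Aux13.sphere_comp_zero hd hhom hharm
            (lt_of_le_of_lt (Nat.lt_succ_iff.mp (Finset.mem_range.mp hj)) hg)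
            _ (homogeneousComponent_isHomogeneous j g)
  unfold innerNeg2
  rw [hsph, hharm]
  simp [evalP]
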